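/- A probabilistic language L : Σ* → [0,1] is computed by some probabilistic finite automaton if and only if there exists a finite monoid M, a probabilistic monoid morphism h : Σ* → D M, and a probabilistic predicate p : M → [0,1] such that L(w) = ∑_{m∈M} h(w)(m)·p(m) for all w. -/

import Mathlib

/-- A probability distribution on a finite type. -/
def IsDist {A : Type*} [Fintype A] (d : A → ℝ) : Prop :=
  (∀ a, 0 ≤ d a) ∧ ∑ a, d a = 1

/-- Probabilistic recognition of a language `L : Σ* → [0,1]` by a finite monoid:
    a probabilistic monoid morphism `h : Σ* → D M` together with a probabilistic
    predicate `p : M → [0,1]` such that `L w = ∑_m h w m · p m`. -/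
structure ProbMonoidRecognizer (A : Type) (L : List A → ℝ) where
  M : Type
  [fin : Fintype M]
  [dec : DecidableEq M]
  [mon : Monoid M]
  h : List A → M → ℝ
  p : M → ℝ
  h_dist : ∀ w, IsDist (h w)
  h_unit : ∀ m, h [] m = if m = 1 then 1 else 0
  h_mul : ∀ v w m, h (v ++ w) m = ∑ x : M × M, if x.1 * x.2 = m then h v x.1 * h w x.2 else 0
  p_mem : ∀ m, p m ∈ Set.Icc (0 : ℝ) 1
  recog : ∀ w, L w = ∑ m, h w m * p m

section Conv

variable {M : Type} [Fintype M] [DecidableEq M] [Monoid M]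

/-- Convolution of two finitely supported functions. -/
def conv (u v : M → ℝ) (m : M) : ℝ :=
  ∑ x : M × M, if x.1 * x.2 = m then u x.1 * v x.2 else 0

/-- Pack a function as a MonoidAlgebra element. -/
noncomputable def tf (u : M → ℝ) : MonoidAlgebra ℝ M := MonoidAlgebra.ofCoeff (Finsupp.equivFunOnFinite.symm u)

@[simp] lemma tf_apply (u : M → ℝ) (m : M) : (tf u).coeff m = u m := rfl

lemma conv_eq_mul (u v : M → ℝ) (m : M) : conv u v m = (tf u * tf v).coeff m := by
  rw [MonoidAlgebra.coeff_mul]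
  rw [Finsupp.sum_fintype _ _ (fun a => by
    rw [Finsupp.sum_fintype]
    · simp
    · intro b; simp)]
  rw [conv, Fintype.sum_prod_type]
  refine Finset.sum_congr rfl fun a _ => ?_
  rw [Finsupp.sum_fintype _ _ (fun b => by simp)]
  rfl

lemma tf_conv (u v : M → ℝ) : tf (conv u v) = tf u * tf v := by
  apply MonoidAlgebra.ext; apply Finsupp.ext; intro m
  rw [tf_apply, conv_eq_mul]

lemma conv_assoc (u v w : M → ℝ) : conv (conv u v) w = conv u (conv v w) := by
  funext m
  rw [conv_eq_mul, conv_eq_mul, tf_conv, tf_conv, mul_assoc]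

def unitDist : M → ℝ := fun m => if m = 1 then 1 else 0

lemma tf_unitDist : tf (unitDist : M → ℝ) = 1 := by
  apply MonoidAlgebra.ext; apply Finsupp.ext; intro m
  rw [tf_apply, unitDist, MonoidAlgebra.one_def, MonoidAlgebra.coeff_single, Finsupp.single_apply]
  simp [eq_comm]

lemma conv_unit_left (v : M → ℝ) : conv unitDist v = v := by
  funext m
  rw [conv_eq_mul, tf_unitDist, one_mul, tf_apply]

lemma unitDist_isDist : IsDist (unitDist : M → ℝ) := by
  constructor
  · intro m; rw [unitDist]; split <;> norm_num
  · simp [unitDist]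

lemma conv_isDist {u v : M → ℝ} (hu : IsDist u) (hv : IsDist v) : IsDist (conv u v) := by
  constructor
  · intro m
    apply Finset.sum_nonneg
    intro x _
    split
    · exact mul_nonneg (hu.1 _) (hv.1 _)
    · exact le_refl 0
  · simp only [conv]
    rw [Finset.sum_comm]
    have key : ∀ x : M × M, (∑ m : M, if x.1 * x.2 = m then u x.1 * v x.2 else 0) = u x.1 * v x.2 := by
      intro x; simp
    rw [Finset.sum_congr rfl fun x _ => key x, Fintype.sum_prod_type, ← Finset.sum_mul_sum, hu.2, hv.2, one_mul]

end Conv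

section Path

variable {A : Type} {k : ℕ}

/-- The path-sum semantics of a PFA. -/
def pathSum (δ : Fin k → A → Fin k → ℝ) (o : Fin k → ℝ) (i : Fin k → ℝ) (w : List A) : ℝ :=
  ∑ q : Fin (w.length + 1) → Fin k,
    i (q 0) *
      (∏ j : Fin w.length, δ (q j.castSucc) (w.get j) (q j.succ)) *
      o (q (Fin.last w.length))

/-- One step of the forward vector evolution. -/
def step (δ : Fin k → A → Fin k → ℝ) (i : Fin k → ℝ) (a : A) : Fin k → ℝ :=
  fun s => ∑ q, i q * δ q a s

lemma pathSum_nil (δ : Fin k → A → Fin k → ℝ) (o i : Fin k → ℝ) :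
    pathSum δ o i [] = ∑ s, i s * o s := by
  rw [pathSum]
  simp only [List.length_nil, List.get_eq_getElem]
  rw [← Equiv.sum_comp (Equiv.funUnique (Fin 1) (Fin k)).symm]
  simp [Equiv.funUnique]

lemma pathSum_cons (δ : Fin k → A → Fin k → ℝ) (o i : Fin k → ℝ) (a : A) (w : List A) :
    pathSum δ o i (a :: w) = pathSum δ o (step δ i a) w := by
  rw [pathSum, pathSum]
  simp only [List.length_cons]
  rw [← Equiv.sum_comp (Fin.consEquiv (fun _ : Fin (w.length + 2) => Fin k))]
  rw [Fintype.sum_prod_type, Finset.sum_comm]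
  refine Finset.sum_congr rfl fun q' _ => ?_
  simp only [step, Finset.sum_mul]
  refine Finset.sum_congr rfl fun q0 _ => ?_
  simp only [Fin.consEquiv_apply, Fin.prod_univ_succ, Fin.cons_zero, Fin.cons_succ,
    Fin.castSucc_zero, List.get_cons_succ, ← Fin.succ_castSucc, ← Fin.succ_last]
  simp only [List.get_eq_getElem, List.length_cons, Fin.val_succ, List.getElem_cons_succ,
    Fin.val_zero, List.getElem_cons_zero]
  ring

lemma pathSum_eq_foldl (δ : Fin k → A → Fin k → ℝ) (o : Fin k → ℝ) (i : Fin k → ℝ) (w : List A) :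
    pathSum δ o i w = ∑ s, (List.foldl (step δ) i w) s * o s := by
  induction w generalizing i with
  | nil => rw [pathSum_nil]; rfl
  | cons a w ih => rw [pathSum_cons, ih]; rfl

/-- The marginal lemma: integrating out all coordinates of a product distribution except one. -/
lemma marginal (δa : Fin k → Fin k → ℝ) (hd : ∀ r, ∑ s, δa r s = 1) (q : Fin k) (F : Fin k → ℝ) :
    ∑ g : Fin k → Fin k, (∏ r, δa r (g r)) * F (g q) = ∑ s, δa q s * F s := by
  have h1 : ∀ g : Fin k → Fin k,
      (∏ r, δa r (g r)) * F (g q) = ∏ r, (δa r (g r) * if r = q then F (g r) else 1) := by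
    intro g
    rw [Finset.prod_mul_distrib]
    congr 1
    rw [Finset.prod_ite_eq' Finset.univ q (fun r => F (g r)), if_pos (Finset.mem_univ q)]
  rw [Finset.sum_congr rfl fun g _ => h1 g,
    ← Fintype.prod_sum (fun r s => δa r s * if r = q then F s else 1)]
  have h2 : ∀ r, (∑ s, δa r s * if r = q then F s else 1) = if r = q then ∑ s, δa q s * F s else 1 := by
    intro r
    by_cases hr : r = q
    · subst hr; simp
    · simp [hr, hd r]
  rw [Finset.prod_congr rfl fun r _ => h2 r,
    Finset.prod_ite_eq' Finset.univ q (fun _ => ∑ s, δa q s * F s), if_pos (Finset.mem_univ q)]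

lemma sum_prodDist (δa : Fin k → Fin k → ℝ) (hd : ∀ r, ∑ s, δa r s = 1) :
    ∑ g : Fin k → Fin k, (∏ r, δa r (g r)) = 1 := by
  rw [← Fintype.prod_sum (fun r s => δa r s)]
  simp [hd]

end Path

section Forward

variable {A : Type} {k : ℕ}

/-- The monoid of self-maps of `Fin k` under (reversed) composition. -/
def compMonoid (k : ℕ) : Monoid (Fin k → Fin k) where
  one := id
  mul f g := g ∘ f
  mul_assoc _ _ _ := rfl
  one_mul _ := rfl
  mul_one _ := rfl

attribute [local instance] compMonoid

/-- The distribution over deterministic transition maps induced by letter `a`. -/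
def Dletter (δ : Fin k → A → Fin k → ℝ) (a : A) : (Fin k → Fin k) → ℝ :=
  fun g => ∏ r, δ r a (g r)

lemma Dletter_isDist (δ : Fin k → A → Fin k → ℝ) (hδ : ∀ q a, IsDist (δ q a)) (a : A) :
    IsDist (Dletter δ a) := by
  constructor
  · intro g
    exact Finset.prod_nonneg fun r _ => (hδ r a).1 _
  · exact sum_prodDist _ (fun r => (hδ r a).2)

/-- The induced distribution over transition maps of a word. -/
def hfun (δ : Fin k → A → Fin k → ℝ) : List A → (Fin k → Fin k) → ℝ
  | [] => unitDist
  | a :: w => conv (Dletter δ a) (hfun δ w)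

lemma hfun_isDist (δ : Fin k → A → Fin k → ℝ) (hδ : ∀ q a, IsDist (δ q a)) (w : List A) :
    IsDist (hfun δ w) := by
  induction w with
  | nil => exact unitDist_isDist
  | cons a w ih => exact conv_isDist (Dletter_isDist δ hδ a) ih

lemma hfun_mul (δ : Fin k → A → Fin k → ℝ) (v w : List A) :
    hfun δ (v ++ w) = conv (hfun δ v) (hfun δ w) := by
  induction v with
  | nil => rw [List.nil_append]; exact (conv_unit_left _).symm
  | cons a v ih =>
    show hfun δ (a :: (v ++ w)) = _
    rw [hfun, ih, ← conv_assoc, ← hfun]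

lemma pathSum_eq_hfun (δ : Fin k → A → Fin k → ℝ) (o : Fin k → ℝ)
    (hδ : ∀ q a, IsDist (δ q a)) (i : Fin k → ℝ) (w : List A) :
    pathSum δ o i w = ∑ f : Fin k → Fin k, hfun δ w f * (∑ q, i q * o (f q)) := by
  induction w generalizing i with
  | nil =>
    rw [pathSum_nil, hfun]
    rw [Finset.sum_eq_single (1 : Fin k → Fin k)]
    · rw [unitDist, if_pos rfl, one_mul]
      rfl
    · intro f _ hf
      rw [unitDist, if_neg hf, zero_mul]
    · intro hmem
      exact absurd (Finset.mem_univ _) hmem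
  | cons a w ih =>
    rw [pathSum_cons, ih, hfun]
    -- RHS: expand the convolution
    have rhs_eq : (∑ f : Fin k → Fin k, conv (Dletter δ a) (hfun δ w) f * (∑ q, i q * o (f q)))
        = ∑ x : (Fin k → Fin k) × (Fin k → Fin k),
            Dletter δ a x.1 * hfun δ w x.2 * (∑ q, i q * o (x.2 (x.1 q))) := by
      simp only [conv, Finset.sum_mul, ite_mul, zero_mul]
      rw [Finset.sum_comm]
      refine Finset.sum_congr rfl fun x _ => ?_
      rw [Finset.sum_ite_eq, if_pos (Finset.mem_univ _)]
      rfl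
    rw [rhs_eq, Fintype.sum_prod_type, Finset.sum_comm]
    refine Finset.sum_congr rfl fun f _ => ?_
    have key : ∀ q : Fin k, (∑ g : Fin k → Fin k, Dletter δ a g * o (f (g q)))
        = ∑ s, δ q a s * o (f s) :=
      fun q => marginal (fun r s => δ r a s) (fun r => (hδ r a).2) q (fun s => o (f s))
    calc hfun δ w f * (∑ q, step δ i a q * o (f q))
        = hfun δ w f * (∑ q, i q * (∑ g : Fin k → Fin k, Dletter δ a g * o (f (g q)))) := by
          congr 1
          simp only [step, Finset.sum_mul, key]
          rw [Finset.sum_comm]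
          refine Finset.sum_congr rfl fun q _ => ?_
          rw [Finset.mul_sum]
          exact Finset.sum_congr rfl fun s _ => by ring
      _ = ∑ g : Fin k → Fin k, Dletter δ a g * hfun δ w f * (∑ q, i q * o (f (g q))) := by
          rw [Finset.mul_sum]
          have l := Finset.sum_congr rfl fun (q : Fin k) (_ : q ∈ Finset.univ) =>
            show hfun δ w f * (i q * ∑ g : Fin k → Fin k, Dletter δ a g * o (f (g q)))
              = ∑ g : Fin k → Fin k, hfun δ w f * (i q * (Dletter δ a g * o (f (g q)))) by
            rw [Finset.mul_sum, Finset.mul_sum]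
            try exact Finset.sum_congr rfl fun g _ => by ring
          have r := Finset.sum_congr rfl fun (g : Fin k → Fin k) (_ : g ∈ Finset.univ) =>
            show Dletter δ a g * hfun δ w f * (∑ q, i q * o (f (g q)))
              = ∑ q, hfun δ w f * (i q * (Dletter δ a g * o (f (g q)))) by
            rw [Finset.mul_sum]
            try exact Finset.sum_congr rfl fun q _ => by ring
          rw [l, r, Finset.sum_comm]
      _ = _ := rfl

end Forward

/-- A probabilistic language is computed by a probabilistic finite automaton iff
    it is probabilistically recognized by a finite monoid. -/
theorem pfa_iff_probMonoidRecognizer {A : Type} (L : List A → ℝ)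
    (hL : ∀ w, L w ∈ Set.Icc (0 : ℝ) 1) :
    (∃ (k : ℕ) (i : Fin k → ℝ) (δ : Fin k → A → Fin k → ℝ) (o : Fin k → ℝ),
      IsDist i ∧ (∀ q a, IsDist (δ q a)) ∧ (∀ q, o q ∈ Set.Icc (0 : ℝ) 1) ∧
      ∀ w : List A, L w =
        ∑ q : Fin (w.length + 1) → Fin k,
          i (q 0) *
            (∏ j : Fin w.length, δ (q j.castSucc) (w.get j) (q j.succ)) *
            o (q (Fin.last w.length)))
    ↔ Nonempty (ProbMonoidRecognizer A L) := by
  constructor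
  · rintro ⟨k, i, δ, o, hi, hδ, ho, hw⟩
    letI : Monoid (Fin k → Fin k) := compMonoid k
    refine ⟨{ M := Fin k → Fin k
              h := hfun δ
              p := fun f => ∑ q, i q * o (f q)
              h_dist := hfun_isDist δ hδ
              h_unit := fun m => rfl
              h_mul := fun v w m => by rw [hfun_mul]; rfl
              p_mem := fun f => ⟨?_, ?_⟩
              recog := fun w => (hw w).trans (pathSum_eq_hfun δ o hδ i w) }⟩
    · exact Finset.sum_nonneg fun q _ => mul_nonneg (hi.1 q) (ho (f q)).1
    · calc ∑ q, i q * o (f q) ≤ ∑ q, i q :=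
            Finset.sum_le_sum fun q _ => mul_le_of_le_one_right (hi.1 q) (ho (f q)).2
        _ = 1 := hi.2
  · rintro ⟨R⟩
    letI := R.fin
    letI := R.dec
    letI := R.mon
    set e : Fin (Fintype.card R.M) ≃ R.M := (Fintype.equivFin R.M).symm with he
    set ifn : Fin (Fintype.card R.M) → ℝ := fun q => R.h [] (e q) with hifn
    set δfn : Fin (Fintype.card R.M) → A → Fin (Fintype.card R.M) → ℝ :=
      fun q a q' => ∑ n, if e q * n = e q' then R.h [a] n else 0 with hδfn
    set ofn : Fin (Fintype.card R.M) → ℝ := fun q => R.p (e q) with hofn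
    have fwd : ∀ w : List A, List.foldl (step δfn) ifn w = fun s => R.h w (e s) := by
      intro w
      induction w using List.reverseRecOn with
      | nil => rfl
      | append_singleton l a ih =>
        rw [List.foldl_append, List.foldl_cons, List.foldl_nil, ih]
        funext s
        show ∑ q, R.h l (e q) * δfn q a s = R.h (l ++ [a]) (e s)
        rw [R.h_mul l [a] (e s), Fintype.sum_prod_type,
          ← Equiv.sum_comp e (fun m => ∑ n, if m * n = e s then R.h l m * R.h [a] n else 0)]
        refine Finset.sum_congr rfl fun q _ => ?_
        rw [hδfn]
        simp only [Finset.mul_sum, mul_ite, mul_zero]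
    refine ⟨Fintype.card R.M, ifn, δfn, ofn, ⟨fun q => (R.h_dist []).1 _, ?_⟩,
      fun q a => ⟨fun q' => Finset.sum_nonneg fun n _ => by
        split
        · exact (R.h_dist [a]).1 n
        · exact le_refl 0, ?_⟩,
      fun q => R.p_mem (e q), ?_⟩
    · rw [hifn]
      show ∑ q, R.h [] (e q) = 1
      rw [Equiv.sum_comp e (R.h [])]
      exact (R.h_dist []).2
    · show ∑ q', ∑ n, (if e q * n = e q' then R.h [a] n else 0) = 1
      rw [Finset.sum_comm]
      have : ∀ n, (∑ q', if e q * n = e q' then R.h [a] n else 0) = R.h [a] n := by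
        intro n
        rw [Equiv.sum_comp e (fun m => if e q * n = m then R.h [a] n else 0)]
        simp
      rw [Finset.sum_congr rfl fun n _ => this n]
      exact (R.h_dist [a]).2
    · intro w
      have : pathSum δfn ofn ifn w = L w := by
        rw [pathSum_eq_foldl, fwd w, R.recog w,
          ← Equiv.sum_comp e (fun m => R.h w m * R.p m)]
      exact this.symm
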